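/- arXiv:2304.05318 — 2 statements merged into one kernel-verified Lean document; each statement's English description precedes it below -/
import Mathlib

section
/- If (T1, T2) is an ordered pair of triangulations of a convex n-gon that share no diagonal, and (T1', T2') is obtained from (T1, T2) by a flip operation (flip a diagonal in one triangulation, and if the resulting diagonal lies in the other triangulation, flip it there too), then T1' and T2' also share no diagonal. -/
/-- A diagonal of the convex `n`-gon: an unordered pair of distinct,
non-adjacent vertices (vertices labeled by `Fin n` in cyclic order). -/
def IsDiag (n : ℕ) (d : Sym2 (Fin n)) : Prop :=
  ∃ a b : Fin n, d = s(a, b) ∧ a ≠ b ∧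
    (a.val + 1) % n ≠ b.val ∧ (b.val + 1) % n ≠ a.val

/-- Two diagonals of the convex `n`-gon cross (their endpoints strictly
interleave around the polygon). -/
def Crosses (n : ℕ) (d e : Sym2 (Fin n)) : Prop :=
  (∃ a b c c' : Fin n, d = s(a, b) ∧ e = s(c, c') ∧ a < c ∧ c < b ∧ b < c') ∨
  (∃ a b c c' : Fin n, e = s(a, b) ∧ d = s(c, c') ∧ a < c ∧ c < b ∧ b < c')

/-- A triangulation of the convex `n`-gon: a maximal set of pairwise
noncrossing diagonals. -/
structure Triangulation (n : ℕ) where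
  diags : Finset (Sym2 (Fin n))
  isDiag : ∀ d ∈ diags, IsDiag n d
  noncross : ∀ d ∈ diags, ∀ e ∈ diags, ¬ Crosses n d e
  maximal : ∀ d, IsDiag n d → (∀ e ∈ diags, ¬ Crosses n d e) → d ∈ diags

/-- `IsFlip T d T'` : the triangulation `T'` is obtained from `T` by flipping
the diagonal `d` (removing `d`, keeping all other diagonals, and inserting the
opposite diagonal of the resulting quadrilateral). -/
def IsFlip {n : ℕ} (T : Triangulation n) (d : Sym2 (Fin n)) (T' : Triangulation n) : Prop :=
  d ∈ T.diags ∧ d ∉ T'.diags ∧ ∀ e ∈ T.diags, e ≠ d → e ∈ T'.diags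

lemma cross₁ {n : ℕ} {a b c c' : Fin n} (h1 : a < c) (h2 : c < b) (h3 : b < c') :
    Crosses n s(a,b) s(c,c') := Or.inl ⟨a,b,c,c',rfl,rfl,h1,h2,h3⟩

lemma cross₂ {n : ℕ} {a b c c' : Fin n} (h1 : c < a) (h2 : a < c') (h3 : c' < b) :
    Crosses n s(a,b) s(c,c') := Or.inr ⟨c,c',a,b,rfl,rfl,h1,h2,h3⟩

lemma crosses_symm {n : ℕ} {d e : Sym2 (Fin n)} (h : Crosses n d e) : Crosses n e d :=
  h.symm

lemma sym2_sorted_eq {n : ℕ} {a b x y : Fin n} (hab : a < b) (hxy : x < y)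
    (h : s(a,b) = s(x,y)) : a = x ∧ b = y := by
  rw [Sym2.eq_iff] at h
  rcases h with ⟨rfl, rfl⟩ | ⟨rfl, rfl⟩
  · exact ⟨rfl, rfl⟩
  · exact absurd (hab.trans hxy) (lt_irrefl _)

lemma crosses_elim {n : ℕ} {g f : Sym2 (Fin n)} {x y : Fin n} (hxy : x < y)
    (hg : g = s(x,y)) (h : Crosses n g f) :
    ∃ u v, f = s(u,v) ∧ u < v ∧ ((x < u ∧ u < y ∧ y < v) ∨ (u < x ∧ x < v ∧ v < y)) := by
  rcases h with ⟨a,b,c,c',hd,he,h1,h2,h3⟩ | ⟨a,b,c,c',he,hd,h1,h2,h3⟩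
  · obtain ⟨rfl, rfl⟩ := sym2_sorted_eq hxy (h1.trans h2) (hg.symm.trans hd)
    exact ⟨c, c', he, h2.trans h3, Or.inl ⟨h1, h2, h3⟩⟩
  · obtain ⟨rfl, rfl⟩ := sym2_sorted_eq hxy (h2.trans h3) (hg.symm.trans hd)
    exact ⟨a, b, he, h1.trans h2, Or.inr ⟨h1, h2, h3⟩⟩

lemma isDiag_of_between {n : ℕ} {x z y : Fin n} (h1 : x < z) (h2 : z < y)
    (h3 : 0 < x.val ∨ y.val + 1 < n) : IsDiag n s(x,y) := by
  have hx := Fin.lt_def.mp h1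
  have hz := Fin.lt_def.mp h2
  have hy := y.isLt
  refine ⟨x, y, rfl, Fin.ne_of_lt (h1.trans h2), ?_, ?_⟩
  · rw [Nat.mod_eq_of_lt (by omega)]; omega
  · rcases Nat.lt_or_ge (y.val + 1) n with hc | hc
    · rw [Nat.mod_eq_of_lt hc]; omega
    · have hn : y.val + 1 = n := by omega
      rw [hn, Nat.mod_self]
      rcases h3 with h3 | h3 <;> omega


lemma noncross_shared {n : ℕ} {a b x y : Fin n} (hab : a < b) (hxy : x < y)
    (hsh : a = x ∨ a = y ∨ b = x ∨ b = y) : ¬ Crosses n s(a,b) s(x,y) := by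
  intro h
  obtain ⟨u, v, hf, huv, hint⟩ := crosses_elim hab rfl h
  obtain ⟨rfl, rfl⟩ := sym2_sorted_eq hxy huv hf
  rcases hsh with rfl | rfl | rfl | rfl <;>
    rcases hint with ⟨h1, h2, h3⟩ | ⟨h1, h2, h3⟩ <;>
    simp only [Fin.lt_def] at h1 h2 h3 hab hxy <;> omega

lemma contra_core {n : ℕ} (T : Triangulation n) (d e1 e2 : Sym2 (Fin n)) (hdT : d ∈ T.diags)
    (a b x y : Fin n) (hab : a < b) (hd : d = s(a,b)) (hxy : x < y)
    (hn1 : ∀ f ∈ T.diags, f ≠ d → ¬ Crosses n e1 f)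
    (hn2 : ∀ f ∈ T.diags, f ≠ d → ¬ Crosses n e2 f)
    (hdiag : IsDiag n s(x,y))
    (hge : Crosses n s(x,y) e1 ∨ Crosses n s(x,y) e2)
    (hsh : a = x ∨ a = y ∨ b = x ∨ b = y)
    (hgdne : x ≠ a ∨ y ≠ b)
    (hkill : ∀ u v : Fin n, u < v → ((x < u ∧ u < y ∧ y < v) ∨ (u < x ∧ x < v ∧ v < y)) →
      Crosses n s(u,v) d ∨ Crosses n s(u,v) e1 ∨ Crosses n s(u,v) e2) : False := by
  have hgd : s(x,y) ≠ d := by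
    rw [hd]; intro h
    obtain ⟨h1', h2'⟩ := sym2_sorted_eq hxy hab h
    rcases hgdne with h' | h'
    · exact h' h1'
    · exact h' h2'
  have hgT : s(x,y) ∉ T.diags := by
    intro hm
    rcases hge with hc | hc
    · exact hn1 _ hm hgd (crosses_symm hc)
    · exact hn2 _ hm hgd (crosses_symm hc)
  have hex : ∃ f ∈ T.diags, Crosses n s(x,y) f := by
    by_contra hno
    push_neg at hno
    exact hgT (T.maximal _ hdiag hno)
  obtain ⟨f, hfT, hcf⟩ := hex
  obtain ⟨u, v, hf, huv, hint⟩ := crosses_elim hxy rfl hcf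
  have hfd : f ≠ d := by
    rintro rfl
    rw [hd] at hcf
    exact noncross_shared hab hxy hsh (crosses_symm hcf)
  rcases hkill u v huv hint with hc | hc | hc
  · exact T.noncross f hfT d hdT (by rw [hf]; exact hc)
  · exact hn1 f hfT hfd (crosses_symm (by rw [hf]; exact hc))
  · exact hn2 f hfT hfd (crosses_symm (by rw [hf]; exact hc))

section Cases
variable {n : ℕ} (T : Triangulation n) (d e1 e2 : Sym2 (Fin n))

/-- RR shared lower endpoint: e1 = (c,p), e2 = (c,q), a < c < b < p < q.  g = (b,q). -/
lemma case_RR_lower (hdT : d ∈ T.diags) (a b c p q : Fin n)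
    (hd : d = s(a,b)) (he1 : e1 = s(c,p)) (he2 : e2 = s(c,q))
    (h1 : a < c) (h2 : c < b) (h3 : b < p) (h4 : p < q)
    (hn1 : ∀ f ∈ T.diags, f ≠ d → ¬ Crosses n e1 f)
    (hn2 : ∀ f ∈ T.diags, f ≠ d → ¬ Crosses n e2 f) : False := by
  refine contra_core T d e1 e2 hdT a b b q (h1.trans h2) hd (h3.trans h4) hn1 hn2
    (isDiag_of_between h3 h4 (Or.inl ?_)) (Or.inl ?_) (Or.inr (Or.inr (Or.inl rfl)))
    (Or.inl (ne_of_gt (h1.trans h2))) ?_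
  · have := Fin.lt_def.mp (h1.trans h2); omega
  · rw [he1]; exact cross₂ h2 h3 h4
  · intro u v huv hint
    rcases hint with ⟨k1, k2, k3⟩ | ⟨k1, k2, k3⟩
    · right; right; rw [he2]; exact cross₂ (h2.trans k1) k2 k3
    · rcases lt_or_ge a u with hu | hu
      · left; rw [hd]; exact cross₂ hu k1 k2
      · right; right; rw [he2]; exact cross₁ (lt_of_le_of_lt hu h1) (h2.trans k2) k3

/-- RR shared upper endpoint: e1 = (p,c), e2 = (q,c), a < p < q < b < c.  g = (a,q). -/
lemma case_RR_upper (hdT : d ∈ T.diags) (a b c p q : Fin n)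
    (hd : d = s(a,b)) (he1 : e1 = s(p,c)) (he2 : e2 = s(q,c))
    (h1 : a < p) (h2 : p < q) (h3 : q < b) (h4 : b < c)
    (hn1 : ∀ f ∈ T.diags, f ≠ d → ¬ Crosses n e1 f)
    (hn2 : ∀ f ∈ T.diags, f ≠ d → ¬ Crosses n e2 f) : False := by
  refine contra_core T d e1 e2 hdT a b a q (h1.trans (h2.trans h3)) hd (h1.trans h2) hn1 hn2
    (isDiag_of_between h1 h2 (Or.inr ?_)) (Or.inl ?_) (Or.inl rfl)
    (Or.inr (ne_of_lt h3)) ?_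
  · have := Fin.lt_def.mp h3; have := b.isLt; omega
  · rw [he1]; exact cross₁ h1 h2 (h3.trans h4)
  · intro u v huv hint
    rcases hint with ⟨k1, k2, k3⟩ | ⟨k1, k2, k3⟩
    · rcases lt_or_ge v c with hv | hv
      · right; right; rw [he2]; exact cross₁ k2 k3 hv
      · left; rw [hd]; exact cross₂ k1 (k2.trans h3) (lt_of_lt_of_le h4 hv)
    · left; rw [hd]; exact cross₁ k1 k2 (k3.trans h3)

/-- RR nested: e1 = (p₁,p₂), e2 = (q₁,q₂), a < p₁ < q₁ < b < q₂ < p₂.  g = (a,q₂). -/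
lemma case_RR_nested (hdT : d ∈ T.diags) (a b p₁ p₂ q₁ q₂ : Fin n)
    (hd : d = s(a,b)) (he1 : e1 = s(p₁,p₂)) (he2 : e2 = s(q₁,q₂))
    (h1 : a < p₁) (h2 : p₁ < q₁) (h3 : q₁ < b) (h4 : b < q₂) (h5 : q₂ < p₂)
    (hn1 : ∀ f ∈ T.diags, f ≠ d → ¬ Crosses n e1 f)
    (hn2 : ∀ f ∈ T.diags, f ≠ d → ¬ Crosses n e2 f) : False := by
  have hab : a < b := h1.trans (h2.trans h3)
  refine contra_core T d e1 e2 hdT a b a q₂ hab hd (hab.trans h4) hn1 hn2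
    (isDiag_of_between hab h4 (Or.inr ?_)) (Or.inl ?_) (Or.inl rfl)
    (Or.inr (ne_of_gt h4)) ?_
  · have := Fin.lt_def.mp h5; have := p₂.isLt; omega
  · rw [he1]; exact cross₁ h1 ((h2.trans h3).trans h4) h5
  · intro u v huv hint
    rcases hint with ⟨k1, k2, k3⟩ | ⟨k1, k2, k3⟩
    · rcases lt_or_ge u b with hu | hu
      · left; rw [hd]; exact cross₂ k1 hu (h4.trans k3)
      · right; right; rw [he2]; exact cross₂ (lt_of_lt_of_le h3 hu) k2 k3
    · rcases lt_or_ge v b with hv | hv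
      · left; rw [hd]; exact cross₁ k1 k2 hv
      · right; right; rw [he2]; exact cross₁ (k1.trans (h1.trans h2)) (lt_of_lt_of_le h3 hv) k3

/-- LL shared upper endpoint: e1 = (p,c), e2 = (q,c), p < q < a < c < b.  g = (p,a). -/
lemma case_LL_upper (hdT : d ∈ T.diags) (a b c p q : Fin n)
    (hd : d = s(a,b)) (he1 : e1 = s(p,c)) (he2 : e2 = s(q,c))
    (h1 : p < q) (h2 : q < a) (h3 : a < c) (h4 : c < b)
    (hn1 : ∀ f ∈ T.diags, f ≠ d → ¬ Crosses n e1 f)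
    (hn2 : ∀ f ∈ T.diags, f ≠ d → ¬ Crosses n e2 f) : False := by
  refine contra_core T d e1 e2 hdT a b p a (h3.trans h4) hd (h1.trans h2) hn1 hn2
    (isDiag_of_between h1 h2 (Or.inr ?_)) (Or.inr ?_) (Or.inr (Or.inl rfl))
    (Or.inl (ne_of_lt (h1.trans h2))) ?_
  · have := Fin.lt_def.mp h3; have := c.isLt; omega
  · rw [he2]; exact cross₁ h1 h2 h3
  · intro u v huv hint
    rcases hint with ⟨k1, k2, k3⟩ | ⟨k1, k2, k3⟩
    · rcases lt_or_ge v b with hv | hv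
      · left; rw [hd]; exact cross₁ k2 k3 hv
      · right; left; rw [he1]; exact cross₂ k1 (k2.trans h3) (lt_of_lt_of_le h4 hv)
    · right; left; rw [he1]; exact cross₁ k1 k2 (k3.trans h3)

/-- LL shared lower endpoint: e1 = (c,p), e2 = (c,q), c < a < p < q < b.  g = (p,b). -/
lemma case_LL_lower (hdT : d ∈ T.diags) (a b c p q : Fin n)
    (hd : d = s(a,b)) (he1 : e1 = s(c,p)) (he2 : e2 = s(c,q))
    (h1 : c < a) (h2 : a < p) (h3 : p < q) (h4 : q < b)
    (hn1 : ∀ f ∈ T.diags, f ≠ d → ¬ Crosses n e1 f)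
    (hn2 : ∀ f ∈ T.diags, f ≠ d → ¬ Crosses n e2 f) : False := by
  refine contra_core T d e1 e2 hdT a b p b (h2.trans (h3.trans h4)) hd (h3.trans h4) hn1 hn2
    (isDiag_of_between h3 h4 (Or.inl ?_)) (Or.inr ?_) (Or.inr (Or.inr (Or.inr rfl)))
    (Or.inl (ne_of_gt h2)) ?_
  · have := Fin.lt_def.mp h1; have := Fin.lt_def.mp h2; omega
  · rw [he2]; exact cross₂ (h1.trans h2) h3 h4
  · intro u v huv hint
    rcases hint with ⟨k1, k2, k3⟩ | ⟨k1, k2, k3⟩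
    · left; rw [hd]; exact cross₂ (h2.trans k1) k2 k3
    · rcases lt_or_ge u a with hu | hu
      · left; rw [hd]; exact cross₁ hu (h2.trans k2) k3
      · right; left; rw [he1]; exact cross₂ (lt_of_lt_of_le h1 hu) k1 k2

/-- LL nested: e1 = (p₁,p₂), e2 = (q₁,q₂), p₁ < q₁ < a < q₂ < p₂ < b.  g = (q₁,b). -/
lemma case_LL_nested (hdT : d ∈ T.diags) (a b p₁ p₂ q₁ q₂ : Fin n)
    (hd : d = s(a,b)) (he1 : e1 = s(p₁,p₂)) (he2 : e2 = s(q₁,q₂))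
    (h1 : p₁ < q₁) (h2 : q₁ < a) (h3 : a < q₂) (h4 : q₂ < p₂) (h5 : p₂ < b)
    (hn1 : ∀ f ∈ T.diags, f ≠ d → ¬ Crosses n e1 f)
    (hn2 : ∀ f ∈ T.diags, f ≠ d → ¬ Crosses n e2 f) : False := by
  have hab : a < b := h3.trans (h4.trans h5)
  refine contra_core T d e1 e2 hdT a b q₁ b hab hd (h2.trans hab) hn1 hn2
    (isDiag_of_between h2 hab (Or.inl ?_)) (Or.inl ?_) (Or.inr (Or.inr (Or.inr rfl)))
    (Or.inl (ne_of_lt h2)) ?_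
  · have := Fin.lt_def.mp h1; omega
  · rw [he1]; exact cross₂ h1 (h2.trans (h3.trans h4)) h5
  · intro u v huv hint
    rcases hint with ⟨k1, k2, k3⟩ | ⟨k1, k2, k3⟩
    · rcases lt_or_ge u q₂ with hu | hu
      · right; right; rw [he2]; exact cross₂ k1 hu ((h4.trans h5).trans k3)
      · left; rw [hd]; exact cross₂ (lt_of_lt_of_le h3 hu) k2 k3
    · rcases lt_or_ge a v with hv | hv
      · left; rw [hd]; exact cross₁ (k1.trans h2) hv k3
      · right; right; rw [he2]; exact cross₁ k1 k2 (lt_of_le_of_lt hv h3)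

/-- Mixed: e1 = (p₁,p₂) of type R (a < p₁ < b < p₂), e2 = (q₁,q₂) of type L
(q₁ < a < q₂ < b), with q₂ ≤ p₁.  g = (q₁,b). -/
lemma case_Mixed (hdT : d ∈ T.diags) (a b p₁ p₂ q₁ q₂ : Fin n)
    (hd : d = s(a,b)) (he1 : e1 = s(p₁,p₂)) (he2 : e2 = s(q₁,q₂))
    (h1 : a < p₁) (h2 : p₁ < b) (h3 : b < p₂) (h4 : q₁ < a) (h5 : a < q₂) (h6 : q₂ ≤ p₁)
    (hn1 : ∀ f ∈ T.diags, f ≠ d → ¬ Crosses n e1 f)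
    (hn2 : ∀ f ∈ T.diags, f ≠ d → ¬ Crosses n e2 f) : False := by
  have hab : a < b := h1.trans h2
  refine contra_core T d e1 e2 hdT a b q₁ b hab hd (h4.trans hab) hn1 hn2
    (isDiag_of_between h4 hab (Or.inr ?_)) (Or.inl ?_) (Or.inr (Or.inr (Or.inr rfl)))
    (Or.inl (ne_of_lt h4)) ?_
  · have := Fin.lt_def.mp h3; have := p₂.isLt; omega
  · rw [he1]; exact cross₁ (h4.trans h1) h2 h3
  · intro u v huv hint
    rcases hint with ⟨k1, k2, k3⟩ | ⟨k1, k2, k3⟩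
    · rcases lt_or_ge a u with hu | hu
      · left; rw [hd]; exact cross₂ hu k2 k3
      · right; right; rw [he2]
        exact cross₂ k1 (lt_of_le_of_lt hu h5) ((lt_of_le_of_lt h6 h2).trans k3)
    · rcases lt_or_ge a v with hv | hv
      · left; rw [hd]; exact cross₁ (k1.trans h4) hv k3
      · right; right; rw [he2]; exact cross₁ k1 k2 (lt_of_le_of_lt hv h5)
end Cases


lemma new_crosses {n : ℕ} {T T' : Triangulation n} {d e : Sym2 (Fin n)} (hf : IsFlip T d T')
    (he' : e ∈ T'.diags) (he : e ∉ T.diags) : Crosses n e d := by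
  obtain ⟨hdT, hdT', hsub⟩ := hf
  have hex : ∃ f ∈ T.diags, Crosses n e f := by
    by_contra h
    push_neg at h
    exact he (T.maximal e (T'.isDiag e he') h)
  obtain ⟨f, hfT, hc⟩ := hex
  by_cases hfd : f = d
  · rwa [hfd] at hc
  · exact absurd hc (T'.noncross e he' f (hsub f hfT hfd))

lemma flip_new_unique {n : ℕ} (T T' : Triangulation n) (d : Sym2 (Fin n)) (hf : IsFlip T d T')
    (e1 e2 : Sym2 (Fin n)) (h1' : e1 ∈ T'.diags) (h1 : e1 ∉ T.diags)
    (h2' : e2 ∈ T'.diags) (h2 : e2 ∉ T.diags) : e1 = e2 := by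
  by_contra hne
  have hdT := hf.1
  have hn1 : ∀ f ∈ T.diags, f ≠ d → ¬ Crosses n e1 f := fun f hfT hfd hc =>
    T'.noncross e1 h1' f (hf.2.2 f hfT hfd) hc
  have hn2 : ∀ f ∈ T.diags, f ≠ d → ¬ Crosses n e2 f := fun f hfT hfd hc =>
    T'.noncross e2 h2' f (hf.2.2 f hfT hfd) hc
  have hc1 : Crosses n d e1 := crosses_symm (new_crosses hf h1' h1)
  have hc2 : Crosses n d e2 := crosses_symm (new_crosses hf h2' h2)
  have hnc : ¬ Crosses n e1 e2 := T'.noncross e1 h1' e2 h2'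
  obtain ⟨a₀, b₀, hd₀, hab₀, -, -⟩ := T.isDiag d hdT
  obtain ⟨a, b, hab, hd⟩ : ∃ a b : Fin n, a < b ∧ d = s(a, b) := by
    rcases lt_or_gt_of_ne hab₀ with h | h
    · exact ⟨a₀, b₀, h, hd₀⟩
    · exact ⟨b₀, a₀, h, hd₀.trans (Sym2.eq_swap)⟩
  obtain ⟨p₁, p₂, he1, hp, hE1⟩ := crosses_elim hab hd hc1
  obtain ⟨q₁, q₂, he2, hq, hE2⟩ := crosses_elim hab hd hc2
  rcases hE1 with ⟨j1, j2, j3⟩ | ⟨j1, j2, j3⟩ <;> rcases hE2 with ⟨k1, k2, k3⟩ | ⟨k1, k2, k3⟩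
  · -- both type R
    rcases lt_trichotomy p₁ q₁ with hpq | hpq | hpq
    · rcases lt_trichotomy p₂ q₂ with hpq' | hpq' | hpq'
      · exact hnc (by rw [he1, he2]; exact cross₁ hpq (k2.trans j3) hpq')
      · exact case_RR_upper T d e1 e2 hdT a b p₂ p₁ q₁ hd he1 (hpq' ▸ he2)
          j1 hpq k2 j3 hn1 hn2
      · exact case_RR_nested T d e1 e2 hdT a b p₁ p₂ q₁ q₂ hd he1 he2
          j1 hpq k2 k3 hpq' hn1 hn2
    · rcases lt_trichotomy p₂ q₂ with hpq' | hpq' | hpq'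
      · exact case_RR_lower T d e1 e2 hdT a b p₁ p₂ q₂ hd he1 (hpq ▸ he2)
          j1 j2 j3 hpq' hn1 hn2
      · exact hne (by rw [he1, he2, hpq, hpq'])
      · exact case_RR_lower T d e2 e1 hdT a b p₁ q₂ p₂ hd (hpq ▸ he2) he1
          j1 j2 k3 hpq' hn2 hn1
    · rcases lt_trichotomy p₂ q₂ with hpq' | hpq' | hpq'
      · exact case_RR_nested T d e2 e1 hdT a b q₁ q₂ p₁ p₂ hd he2 he1
          k1 hpq j2 j3 hpq' hn2 hn1
      · exact case_RR_upper T d e2 e1 hdT a b q₂ q₁ p₁ hd he2 (hpq' ▸ he1)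
          k1 hpq j2 (hpq' ▸ j3) hn2 hn1
      · exact hnc (by rw [he1, he2]; exact crosses_symm (cross₁ hpq (j2.trans k3) hpq'))
  · -- e1 R, e2 L
    rcases lt_or_ge p₁ q₂ with hm | hm
    · exact hnc (by rw [he1, he2]; exact crosses_symm (cross₁ (k1.trans j1) hm (k3.trans j3)))
    · exact case_Mixed T d e1 e2 hdT a b p₁ p₂ q₁ q₂ hd he1 he2 j1 j2 j3 k1 k2 hm hn1 hn2
  · -- e1 L, e2 R
    rcases lt_or_ge q₁ p₂ with hm | hm
    · exact hnc (by rw [he1, he2]; exact cross₁ (j1.trans k1) hm (j3.trans k3))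
    · exact case_Mixed T d e2 e1 hdT a b q₁ q₂ p₁ p₂ hd he2 he1 k1 k2 k3 j1 j2 hm hn2 hn1
  · -- both type L
    rcases lt_trichotomy p₁ q₁ with hpq | hpq | hpq
    · rcases lt_trichotomy p₂ q₂ with hpq' | hpq' | hpq'
      · exact hnc (by rw [he1, he2]; exact cross₁ hpq (k1.trans j2) hpq')
      · exact case_LL_upper T d e1 e2 hdT a b p₂ p₁ q₁ hd he1 (hpq' ▸ he2)
          hpq k1 j2 j3 hn1 hn2
      · exact case_LL_nested T d e1 e2 hdT a b p₁ p₂ q₁ q₂ hd he1 he2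
          hpq k1 k2 hpq' j3 hn1 hn2
    · rcases lt_trichotomy p₂ q₂ with hpq' | hpq' | hpq'
      · exact case_LL_lower T d e1 e2 hdT a b p₁ p₂ q₂ hd he1 (hpq ▸ he2)
          j1 j2 hpq' k3 hn1 hn2
      · exact hne (by rw [he1, he2, hpq, hpq'])
      · exact case_LL_lower T d e2 e1 hdT a b p₁ q₂ p₂ hd (hpq ▸ he2) he1
          j1 k2 hpq' j3 hn2 hn1
    · rcases lt_trichotomy p₂ q₂ with hpq' | hpq' | hpq'
      · exact case_LL_nested T d e2 e1 hdT a b q₁ q₂ p₁ p₂ hd he2 he1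
          hpq j1 j2 hpq' k3 hn2 hn1
      · exact case_LL_upper T d e2 e1 hdT a b q₂ q₁ p₁ hd he2 (hpq' ▸ he1)
          hpq j1 k2 (hpq' ▸ k3) hn2 hn1
      · exact hnc (by rw [he1, he2]; exact crosses_symm (cross₁ hpq (j1.trans k2) hpq'))

lemma flip_subset {n : ℕ} {T T' : Triangulation n} {d d' : Sym2 (Fin n)} (hf : IsFlip T d T')
    (hd'1 : d' ∈ T'.diags) (hd'2 : d' ∉ T.diags) :
    ∀ e ∈ T'.diags, e = d' ∨ (e ∈ T.diags ∧ e ≠ d) := by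
  intro e he
  by_cases heT : e ∈ T.diags
  · exact Or.inr ⟨heT, fun h => hf.2.1 (h ▸ he)⟩
  · exact Or.inl (flip_new_unique T T' d hf e d' he heT hd'1 hd'2)

lemma main_aux {n : ℕ} (T1 T2 T1' : Triangulation n) (d d' : Sym2 (Fin n))
    (hdisj : Disjoint T1.diags T2.diags) (hf : IsFlip T1 d T1')
    (hd'1 : d' ∈ T1'.diags) (hd'2 : d' ∉ T1.diags) :
    (d' ∉ T2.diags → Disjoint T1'.diags T2.diags) ∧
    (∀ T2' : Triangulation n, IsFlip T2 d' T2' → Disjoint T1'.diags T2'.diags) := by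
  have hsub := flip_subset hf hd'1 hd'2
  constructor
  · intro hd'T2
    rw [Finset.disjoint_left]
    intro e he1 he2
    rcases hsub e he1 with rfl | ⟨heT1, -⟩
    · exact hd'T2 he2
    · exact Finset.disjoint_left.mp hdisj heT1 he2
  · intro T2' hf2
    rw [Finset.disjoint_left]
    intro e he1 he2
    rcases hsub e he1 with rfl | ⟨heT1, -⟩
    · exact hf2.2.1 he2
    · by_cases heT2 : e ∈ T2.diags
      · exact Finset.disjoint_left.mp hdisj heT1 heT2
      · exact T1'.noncross e he1 d' hd'1 (new_crosses hf2 he2 heT2)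

/-- Two triangulations are related by a single diagonal flip. -/
def FlipAdj {n : ℕ} (T T' : Triangulation n) : Prop := ∃ d, IsFlip T d T'

/-- `d'` is the new diagonal created when passing from `T` to `T'`. -/
def NewDiag {n : ℕ} (T T' : Triangulation n) (d' : Sym2 (Fin n)) : Prop :=
  d' ∈ T'.diags ∧ d' ∉ T.diags

/-- Flip of a pair of triangulations at a diagonal of the first coordinate:
flip it there, and if the new diagonal lies in the second triangulation,
flip it there as well. -/
def PairFlipFst {n : ℕ} (p q : Triangulation n × Triangulation n) : Prop :=
  ∃ d T₁' d', IsFlip p.1 d T₁' ∧ NewDiag p.1 T₁' d' ∧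
    ((d' ∉ p.2.diags ∧ q = (T₁', p.2)) ∨
     (d' ∈ p.2.diags ∧ ∃ T₂', IsFlip p.2 d' T₂' ∧ q = (T₁', T₂')))

/-- Flip of a pair of triangulations at a diagonal of the second coordinate. -/
def PairFlipSnd {n : ℕ} (p q : Triangulation n × Triangulation n) : Prop :=
  ∃ d T₂' d', IsFlip p.2 d T₂' ∧ NewDiag p.2 T₂' d' ∧
    ((d' ∉ p.1.diags ∧ q = (p.1, T₂')) ∨
     (d' ∈ p.1.diags ∧ ∃ T₁', IsFlip p.1 d' T₁' ∧ q = (T₁', T₂')))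

/-- The flip operation on ordered pairs of triangulations. -/
def PairFlip {n : ℕ} (p q : Triangulation n × Triangulation n) : Prop :=
  PairFlipFst p q ∨ PairFlipSnd p q

/-- Vertices of the flip graph `D_n`: ordered pairs of triangulations of the
convex `n`-gon sharing no diagonal. -/
def DVert (n : ℕ) := {p : Triangulation n × Triangulation n // Disjoint p.1.diags p.2.diags}

/-- The flip graph `D_n` on ordered pairs of disjoint triangulations. -/
def DGraph (n : ℕ) : SimpleGraph (DVert n) where
  Adj p q := p ≠ q ∧ (PairFlip p.1 q.1 ∨ PairFlip q.1 p.1)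
  symm := ⟨fun _ _ h => ⟨h.1.symm, h.2.symm⟩⟩
  loopless := ⟨fun _ h => h.1 rfl⟩

/-- The flip graph `T_n` on all triangulations of the convex `n`-gon. -/
def TriGraph (n : ℕ) : SimpleGraph (Triangulation n) where
  Adj T T' := T ≠ T' ∧ (FlipAdj T T' ∨ FlipAdj T' T)
  symm := ⟨fun _ _ h => ⟨h.1.symm, h.2.symm⟩⟩
  loopless := ⟨fun _ h => h.1 rfl⟩

/-- Vertices of `T_n(S)`: triangulations disjoint from `S`. -/
def TnSVert (n : ℕ) (S : Triangulation n) := {T : Triangulation n // Disjoint T.diags S.diags}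

/-- The flip graph `T_n(S)` induced on triangulations disjoint from `S`. -/
def TnS (n : ℕ) (S : Triangulation n) : SimpleGraph (TnSVert n S) where
  Adj T T' := T ≠ T' ∧ (FlipAdj T.1 T'.1 ∨ FlipAdj T'.1 T.1)
  symm := ⟨fun _ _ h => ⟨h.1.symm, h.2.symm⟩⟩
  loopless := ⟨fun _ h => h.1 rfl⟩

/-- If `(T1, T2)` is an ordered pair of triangulations of a
convex `n`-gon sharing no diagonal, and `(T1', T2')` is obtained from it by a
flip, then `T1'` and `T2'` also share no diagonal. -/
theorem pairFlip_preserves_disjoint (n : ℕ) (hn : 4 ≤ n)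
    (p q : Triangulation n × Triangulation n)
    (hdisj : Disjoint p.1.diags p.2.diags) (h : PairFlip p q) :
    Disjoint q.1.diags q.2.diags := by
  rcases h with ⟨d, T₁', d', hf, ⟨hd'1, hd'2⟩, hcase⟩ | ⟨d, T₂', d', hf, ⟨hd'1, hd'2⟩, hcase⟩
  · have H := main_aux p.1 p.2 T₁' d d' hdisj hf hd'1 hd'2
    rcases hcase with ⟨hnot, rfl⟩ | ⟨hin, T₂', hf2, rfl⟩
    · exact H.1 hnot
    · exact H.2 T₂' hf2
  · have H := main_aux p.2 p.1 T₂' d d' hdisj.symm hf hd'1 hd'2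
    rcases hcase with ⟨hnot, rfl⟩ | ⟨hin, T₁', hf2, rfl⟩
    · exact (H.1 hnot).symm
    · exact (H.2 T₁' hf2).symm
end

section
/- For n ≥ 5 and any triangulation S of the convex n-gon, the graph T_n(S), whose vertices are triangulations of the n-gon disjoint from S with edges given by single diagonal flips that stay disjoint from S, is connected and has diameter at most 2n−8. -/
lemma crosses_comm {n : ℕ} {d e : Sym2 (Fin n)} : Crosses n d e ↔ Crosses n e d :=
  or_comm

lemma crosses_shared {n : ℕ} {d e : Sym2 (Fin n)} {x : Fin n}
    (h : Crosses n d e) (hd : x ∈ d) (he : x ∈ e) : False := by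
  rcases h with ⟨a,b,c,c',rfl,rfl,h1,h2,h3⟩ | ⟨a,b,c,c',rfl,rfl,h1,h2,h3⟩ <;>
  · rw [Sym2.mem_iff] at hd he
    rcases hd with rfl|rfl <;> rcases he with h|h <;> subst h <;> omega

lemma crosses_irrefl {n : ℕ} {d : Sym2 (Fin n)} : ¬ Crosses n d d := by
  intro h
  induction d using Sym2.ind with
  | _ x y => exact crosses_shared h (Sym2.mem_iff.mpr (Or.inl rfl)) (Sym2.mem_iff.mpr (Or.inl rfl))

lemma crosses_iff {n : ℕ} {a b c d : Fin n} (hab : a < b) (hcd : c < d) :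
    Crosses n s(a,b) s(c,d) ↔ (a < c ∧ c < b ∧ b < d) ∨ (c < a ∧ a < d ∧ d < b) := by
  constructor
  · rintro (⟨p,q,r,r',h1,h2,h3,h4,h5⟩ | ⟨p,q,r,r',h1,h2,h3,h4,h5⟩) <;>
      rw [Sym2.eq_iff] at h1 h2 <;>
      rcases h1 with ⟨rfl,rfl⟩|⟨rfl,rfl⟩ <;> rcases h2 with ⟨rfl,rfl⟩|⟨rfl,rfl⟩
    · exact Or.inl ⟨h3,h4,h5⟩
    all_goals first
      | (exact Or.inl ⟨h3,h4,h5⟩) | (exact Or.inr ⟨h3,h4,h5⟩)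
      | (exact absurd hab (by omega)) | (exact absurd hcd (by omega))
      | omega
  · rintro (⟨h1,h2,h3⟩|⟨h1,h2,h3⟩)
    · exact Or.inl ⟨a,b,c,d,rfl,rfl,h1,h2,h3⟩
    · exact Or.inr ⟨c,d,a,b,rfl,rfl,h1,h2,h3⟩

lemma isDiag_iff {n : ℕ} {a b : Fin n} (hab : a < b) :
    IsDiag n s(a,b) ↔ (a.val + 2 ≤ b.val ∧ ¬(a.val = 0 ∧ b.val = n - 1)) := by
  have hb : b.val < n := b.isLt
  have ha : a.val < n := a.isLt
  have hab' : a.val < b.val := hab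
  constructor
  · rintro ⟨p,q,h1,h2,h3,h4⟩
    rw [Sym2.eq_iff] at h1
    have key : (a.val + 1) % n ≠ b.val ∧ (b.val + 1) % n ≠ a.val := by
      rcases h1 with ⟨rfl,rfl⟩|⟨rfl,rfl⟩
      · exact ⟨h3,h4⟩
      · exact ⟨h4,h3⟩
    obtain ⟨k3,k4⟩ := key
    constructor
    · have : (a.val + 1) % n = a.val + 1 := Nat.mod_eq_of_lt (by omega)
      omega
    · rintro ⟨h0, hn1⟩
      have hbv : b.val + 1 = n := by omega
      have : (b.val + 1) % n = 0 := by rw [hbv]; exact Nat.mod_self n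
      omega
  · rintro ⟨h1, h2⟩
    refine ⟨a, b, rfl, by intro h; rw [h] at hab; exact lt_irrefl _ hab, ?_, ?_⟩
    · have : (a.val+1) % n = a.val + 1 := Nat.mod_eq_of_lt (by omega)
      omega
    · rcases Nat.lt_or_ge (b.val+1) n with h|h
      · rw [Nat.mod_eq_of_lt h]; omega
      · have hb1 : b.val + 1 = n := by omega
        rw [hb1, Nat.mod_self]; omega

lemma diag_canon {n : ℕ} {d : Sym2 (Fin n)} (h : IsDiag n d) :
    ∃ a b : Fin n, d = s(a,b) ∧ a < b ∧ a.val + 2 ≤ b.val ∧ ¬(a.val = 0 ∧ b.val = n - 1) := by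
  rcases h with ⟨p,q,rfl,h2,h3,h4⟩
  rcases lt_trichotomy p q with hlt|heq|hgt
  · have := (isDiag_iff hlt).mp ⟨p,q,rfl,h2,h3,h4⟩
    exact ⟨p,q,rfl,hlt,this.1,this.2⟩
  · exact absurd heq h2
  · have hd : s(p,q) = s(q,p) := Sym2.eq_swap
    have := (isDiag_iff hgt).mp (by rw [hd] at *; exact ⟨q,p,rfl,Ne.symm h2,h4,h3⟩)
    exact ⟨q,p,hd,hgt,this.1,this.2⟩

lemma crosses_iff' {n : ℕ} {a b c d : Fin n} (hab : a.val < b.val) (hcd : c.val < d.val) :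
    Crosses n s(a,b) s(c,d) ↔
      ((a.val < c.val ∧ c.val < b.val ∧ b.val < d.val) ∨
       (c.val < a.val ∧ a.val < d.val ∧ d.val < b.val)) := by
  rw [crosses_iff hab hcd]
  simp only [Fin.lt_def]

instance isDiag_dec (n : ℕ) : DecidablePred (IsDiag n) := fun _ => by
  unfold IsDiag; infer_instance

lemma triang_ext {n : ℕ} {T T' : Triangulation n} (h : T.diags = T'.diags) : T = T' := by
  cases T; cases T'; simp only at h; subst h; rfl

/-- The fan triangulation at vertex `0`. -/
noncomputable def Fan (n : ℕ) [NeZero n] : Triangulation n where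
  diags := Finset.univ.filter (fun f => (0 : Fin n) ∈ f ∧ IsDiag n f)
  isDiag := by intro d hd; exact (Finset.mem_filter.mp hd).2.2
  noncross := by
    intro d hd e he hc
    exact crosses_shared hc (Finset.mem_filter.mp hd).2.1 (Finset.mem_filter.mp he).2.1
  maximal := by
    intro d hd hnc
    rcases diag_canon hd with ⟨a, b, rfl, hab, h2, h3⟩
    by_cases h0 : (0 : Fin n) ∈ s(a,b)
    · exact Finset.mem_filter.mpr ⟨Finset.mem_univ _, h0, hd⟩
    · exfalso
      have ha1 : 1 ≤ a.val := by
        rcases Nat.eq_zero_or_pos a.val with h|h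
        · exfalso; apply h0; rw [Sym2.mem_iff]; left
          exact Fin.ext (by simpa using h.symm)
        · exact h
      have hb : b.val < n := b.isLt
      -- the fan diagonal s(0, a+1) crosses d
      have hlt : a.val + 1 < n := by omega
      set z : Fin n := ⟨0, by omega⟩ with hz
      set x : Fin n := ⟨a.val + 1, hlt⟩ with hx
      have hdx : IsDiag n s(z, x) := by
        rw [isDiag_iff (show z < x by simp [Fin.lt_def, hz, hx])]
        constructor
        · simp [hz, hx]; omega
        · simp [hz, hx]; omega
      have hcr : Crosses n s(z,x) s(a,b) := by
        rw [crosses_iff' (show z.val < x.val by simp [hz,hx]) (show a.val < b.val from hab)]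
        left; exact ⟨show 0 < a.val by omega, show a.val < a.val + 1 by omega, show a.val + 1 < b.val by omega⟩
      have hmem : s(z,x) ∈ Finset.univ.filter (fun f => (0 : Fin n) ∈ f ∧ IsDiag n f) := by
        refine Finset.mem_filter.mpr ⟨Finset.mem_univ _, ?_, hdx⟩
        rw [Sym2.mem_iff]; left; apply Fin.ext; simp [hz]
      exact hnc _ hmem (crosses_comm.mp hcr)

lemma mem_fan {n : ℕ} [NeZero n] {d : Sym2 (Fin n)} :
    d ∈ (Fan n).diags ↔ ((0 : Fin n) ∈ d ∧ IsDiag n d) := by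
  simp [Fan]

lemma fan_form {n : ℕ} [NeZero n] {d : Sym2 (Fin n)} (hd : d ∈ (Fan n).diags) :
    ∃ x : Fin n, d = s((0 : Fin n), x) ∧ 2 ≤ x.val ∧ x.val ≤ n - 2 ∧ x.val < n := by
  obtain ⟨h0, hdg⟩ := mem_fan.mp hd
  rcases diag_canon hdg with ⟨a, b, rfl, hab, h2, h3⟩
  rw [Sym2.mem_iff] at h0
  have hb : b.val < n := b.isLt
  rcases h0 with h|h
  · subst h
    have hz : (0 : Fin n).val = 0 := rfl
    rw [hz] at h2 h3
    refine ⟨b, rfl, by omega, by omega, hb⟩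
  · exfalso; subst h; simp [Fin.lt_def, Fin.val_zero] at hab


noncomputable def glen {n : ℕ} : Sym2 (Fin n) → ℕ :=
  Sym2.lift ⟨fun x y => max x.val y.val - min x.val y.val, by
    intro x y; simp [Nat.max_comm, Nat.min_comm]⟩

lemma glen_mk {n : ℕ} (a b : Fin n) :
    glen s(a,b) = max a.val b.val - min a.val b.val := by
  simp [glen]

lemma glen_lt {n : ℕ} {a b : Fin n} (h : a.val < b.val) :
    glen s(a,b) = b.val - a.val := by
  rw [glen_mk, Nat.max_eq_right h.le, Nat.min_eq_left h.le]

lemma zero_mem_iff {n : ℕ} [NeZero n] {c c' : Fin n} :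
    (0:Fin n) ∈ s(c,c') ↔ c.val = 0 ∨ c'.val = 0 := by
  rw [Sym2.mem_iff]
  constructor
  · rintro (h|h) <;> [left; right] <;> rw [← h] <;> rfl
  · rintro (h|h) <;> [left; right] <;> exact Fin.ext h.symm

lemma flip_step (n : ℕ) (hn : 5 ≤ n) [NeZero n] (T : Triangulation n) (hne : T ≠ Fan n) :
    ∃ T' : Triangulation n, FlipAdj T T' ∧
      (∀ f ∈ T'.diags, f ∉ T.diags → (0 : Fin n) ∈ f) ∧
      ((Fan n).diags \ T'.diags) ⊂ ((Fan n).diags \ T.diags) := by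
  classical
  have hzv : (0:Fin n).val = 0 := rfl
  -- the set of non-fan diagonals of T
  set E := T.diags.filter (fun d => (0 : Fin n) ∉ d) with hE
  have hEne : E.Nonempty := by
    rw [Finset.filter_nonempty_iff]
    by_contra h
    push_neg at h
    apply hne; apply triang_ext
    apply Finset.Subset.antisymm
    · intro d hd
      exact mem_fan.mpr ⟨h d hd, T.isDiag d hd⟩
    · intro d hd
      obtain ⟨h0, hdg⟩ := mem_fan.mp hd
      refine T.maximal d hdg ?_
      intro g hg hcr
      exact crosses_shared hcr h0 (h g hg)
  obtain ⟨e, heE, hemax⟩ := Finset.exists_max_image E glen hEne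
  have heT : e ∈ T.diags := (Finset.mem_filter.mp heE).1
  have he0 : (0:Fin n) ∉ e := (Finset.mem_filter.mp heE).2
  obtain ⟨a, b, hedef, hab, hab2, hab3⟩ := diag_canon (T.isDiag e heT)
  have hab' : a.val < b.val := hab
  have ha1 : 1 ≤ a.val := by
    rcases Nat.eq_zero_or_pos a.val with h|h
    · exfalso; apply he0; rw [hedef, zero_mem_iff]; exact Or.inl h
    · exact h
  have hbn : b.val < n := b.isLt
  have hglen : glen e = b.val - a.val := by
    rw [hedef, glen_lt hab']
  have hmax : ∀ g ∈ T.diags, (0:Fin n) ∉ g → glen g ≤ b.val - a.val := by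
    intro g hg h0
    rw [← hglen]
    exact hemax g (Finset.mem_filter.mpr ⟨hg, h0⟩)
  -- claim (β)
  have hβ : b.val = n - 1 ∨ s((0:Fin n), b) ∈ T.diags := by
    by_cases hb1 : b.val = n-1
    · exact Or.inl hb1
    right
    apply T.maximal
    · rw [isDiag_iff (show (0:Fin n) < b from by rw [Fin.lt_def]; omega)]
      rw [hzv]; omega
    intro g hg hcr
    obtain ⟨c, c', hgdef, hcc, hcc2, hcc3⟩ := diag_canon (T.isDiag g hg)
    have hcc' : c.val < c'.val := hcc
    have hc'n : c'.val < n := c'.isLt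
    rw [hgdef] at hcr
    rw [crosses_iff' (by omega) (by exact hcc')] at hcr
    rw [hzv] at hcr
    rcases hcr with ⟨h1,h2,h3⟩ | ⟨h1,_,_⟩
    swap
    · omega
    -- 0 < c < b < c'
    have hg0 : (0:Fin n) ∉ g := by
      rw [hgdef, zero_mem_iff]; omega
    rcases Nat.lt_or_ge a.val c.val with h|h
    · -- a < c : g crosses e
      apply T.noncross e heT g hg
      rw [hedef, hgdef, crosses_iff' hab' hcc']
      left; exact ⟨h, h2, h3⟩
    · -- c ≤ a : glen g > b - a
      have := hmax g hg hg0
      rw [hgdef, glen_lt hcc'] at this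
      omega
  -- claim (α)
  have hα : a.val = 1 ∨ s((0:Fin n), a) ∈ T.diags := by
    by_cases ha2 : a.val = 1
    · exact Or.inl ha2
    right
    apply T.maximal
    · rw [isDiag_iff (show (0:Fin n) < a from by rw [Fin.lt_def]; omega)]
      rw [hzv]; omega
    intro g hg hcr
    obtain ⟨c, c', hgdef, hcc, hcc2, hcc3⟩ := diag_canon (T.isDiag g hg)
    have hcc' : c.val < c'.val := hcc
    have hc'n : c'.val < n := c'.isLt
    rw [hgdef] at hcr
    rw [crosses_iff' (by omega) (by exact hcc'), hzv] at hcr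
    rcases hcr with ⟨h1,h2,h3⟩ | ⟨h1,_,_⟩
    swap
    · omega
    -- 0 < c < a < c'
    have hg0 : (0:Fin n) ∉ g := by
      rw [hgdef, zero_mem_iff]; omega
    rcases Nat.lt_or_ge c'.val b.val with h|h
    · -- c' < b : g crosses e
      apply T.noncross e heT g hg
      rw [hedef, hgdef, crosses_iff' hab' hcc']
      right; exact ⟨h2, h3, h⟩
    · -- c' ≥ b : glen too big
      have := hmax g hg hg0
      rw [hgdef, glen_lt hcc'] at this
      omega
  -- the apex w
  set P : ℕ → Prop := fun m => a.val < m ∧ m < b.val ∧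
      (m = a.val + 1 ∨ ∃ x : Fin n, x.val = m ∧ s(a, x) ∈ T.diags) with hP
  obtain ⟨w, ⟨hw1, hw2, hw3⟩, hwgr⟩ :
      ∃ w, P w ∧ ∀ k, w < k → k ≤ b.val - 1 → ¬ P k := by
    refine ⟨Nat.findGreatest P (b.val - 1), ?_, ?_⟩
    · exact Nat.findGreatest_spec (show a.val + 1 ≤ b.val - 1 by omega)
        ⟨by omega, by omega, Or.inl rfl⟩
    · intro k hk1 hk2
      exact Nat.findGreatest_is_greatest hk1 hk2
  simp only [hP] at hw1 hw2 hw3 hwgr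
  have hwn : w < n := by omega
  obtain ⟨W, hWv⟩ : ∃ W : Fin n, W.val = w := ⟨⟨w, hwn⟩, rfl⟩
  have hsaW : w = a.val + 1 ∨ s(a, W) ∈ T.diags := by
    rcases hw3 with h|⟨x, hx, hmem⟩
    · exact Or.inl h
    · right; have : x = W := Fin.ext (by rw [hWv, hx])
      rwa [this] at hmem
  -- claim 3a : apex triangle other side
  have h3a : w = b.val - 1 ∨ s(W, b) ∈ T.diags := by
    by_cases hwb : w = b.val - 1
    · exact Or.inl hwb
    right
    apply T.maximal
    · rw [isDiag_iff (show W < b from by rw [Fin.lt_def, hWv]; omega)]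
      rw [hWv]; omega
    intro g hg hcr
    obtain ⟨c, c', hgdef, hcc, hcc2, hcc3⟩ := diag_canon (T.isDiag g hg)
    have hcc' : c.val < c'.val := hcc
    have hc'n : c'.val < n := c'.isLt
    rw [hgdef] at hcr
    rw [crosses_iff' (show W.val < b.val from by rw [hWv]; omega) hcc', hWv] at hcr
    rcases hcr with ⟨h1,h2,h3⟩ | ⟨h1,h2,h3⟩
    · -- w < c < b < c' : g crosses e since a < c
      apply T.noncross e heT g hg
      rw [hedef, hgdef, crosses_iff' hab' hcc']
      left; exact ⟨by omega, h2, h3⟩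
    · -- c < w < c' < b
      rcases lt_trichotomy c.val a.val with h|h|h
      · -- c < a : g crosses e
        apply T.noncross e heT g hg
        rw [hedef, hgdef, crosses_iff' hab' hcc']
        right; exact ⟨h, by omega, h3⟩
      · -- c = a : contradicts maximality of w
        have hca : c = a := Fin.ext h
        apply hwgr c'.val (by omega) (by omega)
        refine ⟨by omega, by omega, Or.inr ⟨c', rfl, ?_⟩⟩
        rw [← hca, ← hgdef]; exact hg
      · -- a < c < w : g crosses s(a, W)
        rcases hsaW with hw' | hmem
        · omega
        apply T.noncross _ hmem g hg
        rw [hgdef, crosses_iff' (show a.val < W.val from by rw [hWv]; omega) hcc']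
        left; rw [hWv]; exact ⟨h, h1, h2⟩
  -- the new diagonal
  set d' : Sym2 (Fin n) := s((0:Fin n), W) with hd'
  have h0d' : (0:Fin n) ∈ d' := by rw [hd', Sym2.mem_iff]; left; rfl
  have hd'diag : IsDiag n d' := by
    rw [hd', isDiag_iff (show (0:Fin n) < W from by rw [Fin.lt_def, hWv]; omega)]
    rw [hzv, hWv]; omega
  have hd'cross_e : Crosses n d' e := by
    rw [hd', hedef, crosses_iff' (show (0:Fin n).val < W.val from by rw [hzv, hWv]; omega) hab']
    left; rw [hzv, hWv]; exact ⟨by omega, by omega, by omega⟩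
  have hd'compat : ∀ g ∈ T.diags, g ≠ e → ¬ Crosses n d' g := by
    intro g hg hgne hcr
    obtain ⟨c, c', hgdef, hcc, hcc2, hcc3⟩ := diag_canon (T.isDiag g hg)
    have hcc' : c.val < c'.val := hcc
    have hc'n : c'.val < n := c'.isLt
    rw [hd', hgdef] at hcr
    rw [crosses_iff' (show (0:Fin n).val < W.val from by rw [hzv, hWv]; omega) hcc',
        hzv, hWv] at hcr
    rcases hcr with ⟨h1,h2,h3⟩ | ⟨h1,_,_⟩
    swap
    · omega
    -- 0 < c, c < w, w < c'
    have hg0 : (0:Fin n) ∉ g := by rw [hgdef, zero_mem_iff]; omega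
    rcases lt_trichotomy c.val a.val with h|h|h
    · -- c < a
      rcases Nat.lt_or_ge c'.val b.val with h'|h'
      · apply T.noncross e heT g hg
        rw [hedef, hgdef, crosses_iff' hab' hcc']
        right; exact ⟨h, by omega, h'⟩
      · have hineq := hmax g hg hg0
        rw [hgdef, glen_lt hcc'] at hineq
        revert hineq h1 h2 h3 h h' ha1 hab2 hbn hcc2 hc'n
        clear * -
        intros; omega
    · -- c = a
      have hca : c = a := Fin.ext h
      rcases lt_trichotomy c'.val b.val with h'|h'|h'
      · apply hwgr c'.val (by omega) (by omega)
        refine ⟨by omega, by omega, Or.inr ⟨c', rfl, ?_⟩⟩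
        rw [← hca, ← hgdef]; exact hg
      · have hcb : c' = b := Fin.ext h'
        apply hgne
        rw [hgdef, hca, hcb, hedef]
      · have hineq := hmax g hg hg0
        rw [hgdef, glen_lt hcc'] at hineq
        revert hineq h1 h2 h3 h h' ha1 hab2 hbn hcc2 hc'n
        clear * -
        intros; omega
    · -- a < c < w : crosses s(a,W)
      rcases hsaW with hw' | hmem
      · omega
      apply T.noncross _ hmem g hg
      rw [hgdef, crosses_iff' (show a.val < W.val from by rw [hWv]; omega) hcc']
      left; rw [hWv]; exact ⟨h, h2, h3⟩
  -- the replacement set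
  set FS := Finset.univ.filter
    (fun f => IsDiag n f ∧ Crosses n f e ∧ ∀ g ∈ T.diags.erase e, ¬ Crosses n f g) with hFS
  have hd'FS : d' ∈ FS := by
    rw [hFS, Finset.mem_filter]
    exact ⟨Finset.mem_univ _, hd'diag, hd'cross_e,
      fun g hg => hd'compat g (Finset.mem_of_mem_erase hg) (Finset.ne_of_mem_erase hg)⟩
  have hFS0 : ∀ f ∈ FS, (0:Fin n) ∈ f := by
    intro f hf
    rw [hFS, Finset.mem_filter] at hf
    obtain ⟨-, hfd, hfcr, hfcompat⟩ := hf
    obtain ⟨c, c', hfdef, hcc, hcc2, hcc3⟩ := diag_canon hfd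
    have hcc' : c.val < c'.val := hcc
    have hc'n : c'.val < n := c'.isLt
    rw [hfdef, hedef, crosses_iff' hcc' hab'] at hfcr
    rcases hfcr with ⟨h1,h2,h3⟩ | ⟨h1,h2,h3⟩
    · -- c < a < c' < b
      rcases Nat.eq_zero_or_pos c.val with h0|h0
      · rw [hfdef, zero_mem_iff]; omega
      exfalso
      rcases hα with ha' | hmem
      · omega
      have hne' : s((0:Fin n), a) ≠ e := by
        intro hh
        apply he0; rw [← hh, Sym2.mem_iff]; left; rfl
      apply hfcompat _ (Finset.mem_erase.mpr ⟨hne', hmem⟩)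
      rw [hfdef, crosses_iff' hcc' (show (0:Fin n).val < a.val from by rw [hzv]; omega), hzv]
      right; exact ⟨h0, h1, h2⟩
    · -- a < c < b < c'
      exfalso
      have hbn1 : b.val ≠ n - 1 := by omega
      rcases hβ with hb' | hmem
      · omega
      have hne' : s((0:Fin n), b) ≠ e := by
        intro hh
        apply he0; rw [← hh, Sym2.mem_iff]; left; rfl
      apply hfcompat _ (Finset.mem_erase.mpr ⟨hne', hmem⟩)
      rw [hfdef, crosses_iff' hcc' (show (0:Fin n).val < b.val from by rw [hzv]; omega), hzv]
      right; exact ⟨by omega, h2, h3⟩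
  -- build T'
  refine ⟨⟨T.diags.erase e ∪ FS, ?_, ?_, ?_⟩, ⟨e, heT, ?_, ?_⟩, ?_, ?_⟩
  · -- isDiag
    intro d hd
    rcases Finset.mem_union.mp hd with h|h
    · exact T.isDiag d (Finset.mem_of_mem_erase h)
    · exact ((Finset.mem_filter.mp h).2).1
  · -- noncross
    intro d1 h1 d2 h2 hcr
    rcases Finset.mem_union.mp h1 with h1'|h1' <;> rcases Finset.mem_union.mp h2 with h2'|h2'
    · exact T.noncross d1 (Finset.mem_of_mem_erase h1') d2 (Finset.mem_of_mem_erase h2') hcr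
    · exact ((Finset.mem_filter.mp h2').2).2.2 d1 h1' (crosses_comm.mp hcr)
    · exact ((Finset.mem_filter.mp h1').2).2.2 d2 h2' hcr
    · exact crosses_shared hcr (hFS0 d1 h1') (hFS0 d2 h2')
  · -- maximal
    intro d hd hnc
    by_cases hce : Crosses n d e
    · apply Finset.mem_union_right
      rw [hFS, Finset.mem_filter]
      exact ⟨Finset.mem_univ _, hd, hce, fun g hg => hnc g (Finset.mem_union_left _ hg)⟩
    · have hdT : d ∈ T.diags := by
        apply T.maximal d hd
        intro g hg
        by_cases hge : g = e
        · rw [hge]; exact hce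
        · exact hnc g (Finset.mem_union_left _ (Finset.mem_erase.mpr ⟨hge, hg⟩))
      by_cases hde : d = e
      · exfalso
        apply hnc d' (Finset.mem_union_right _ hd'FS)
        rw [hde]
        exact crosses_comm.mp hd'cross_e
      · exact Finset.mem_union_left _ (Finset.mem_erase.mpr ⟨hde, hdT⟩)
  · -- e ∉ T'
    intro h
    rcases Finset.mem_union.mp h with h'|h'
    · exact (Finset.mem_erase.mp h').1 rfl
    · exact crosses_irrefl ((Finset.mem_filter.mp h').2).2.1
  · -- T \ e ⊆ T'
    intro f hf hfe
    exact Finset.mem_union_left _ (Finset.mem_erase.mpr ⟨hfe, hf⟩)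
  · -- new diagonals contain 0
    intro f hf hfT
    rcases Finset.mem_union.mp hf with h|h
    · exact absurd (Finset.mem_of_mem_erase h) hfT
    · exact hFS0 f h
  · -- strict shrinking of missing fan diagonals
    rw [Finset.ssubset_iff_of_subset]
    swap
    · intro x hx
      rw [Finset.mem_sdiff] at hx ⊢
      obtain ⟨hxF, hxT'⟩ := hx
      refine ⟨hxF, ?_⟩
      intro hxT
      apply hxT'
      apply Finset.mem_union_left
      rw [Finset.mem_erase]
      refine ⟨?_, hxT⟩
      intro hh
      apply he0
      rw [← hh]
      exact (mem_fan.mp hxF).1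
    · refine ⟨d', ?_, ?_⟩
      · rw [Finset.mem_sdiff]
        refine ⟨mem_fan.mpr ⟨h0d', hd'diag⟩, ?_⟩
        intro hd'T
        exact T.noncross d' hd'T e heT hd'cross_e
      · rw [Finset.mem_sdiff]
        push_neg
        intro _
        exact Finset.mem_union_right _ hd'FS


lemma nonfan_crosses {n : ℕ} [NeZero n] {d : Sym2 (Fin n)} (hd : IsDiag n d)
    (h0 : (0:Fin n) ∉ d) : ∃ f ∈ (Fan n).diags, Crosses n f d := by
  rcases diag_canon hd with ⟨a, b, rfl, hab, h2, h3⟩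
  have hab' : a.val < b.val := hab
  have hbn : b.val < n := b.isLt
  have ha1 : 1 ≤ a.val := by
    rcases Nat.eq_zero_or_pos a.val with h|h
    · exact absurd (zero_mem_iff.mpr (Or.inl h)) h0
    · exact h
  have hlt : a.val + 1 < n := by omega
  have hzv : (0:Fin n).val = 0 := rfl
  have hmk : ((⟨a.val+1, hlt⟩ : Fin n)).val = a.val + 1 := rfl
  refine ⟨s((0:Fin n), ⟨a.val+1, hlt⟩), ?_, ?_⟩
  · refine mem_fan.mpr ⟨Sym2.mem_iff.mpr (Or.inl rfl), ?_⟩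
    rw [isDiag_iff (show (0:Fin n) < ⟨a.val+1, hlt⟩ from by rw [Fin.lt_def]; exact Nat.succ_pos _)]
    rw [hzv, hmk]
    omega
  · rw [crosses_iff' (show (0:Fin n).val < (⟨a.val+1, hlt⟩ : Fin n).val from Nat.succ_pos _) hab']
    left
    rw [hzv, hmk]
    exact ⟨by omega, by omega, by omega⟩

lemma fan_subset_eq {n : ℕ} [NeZero n] {T : Triangulation n}
    (h : (Fan n).diags ⊆ T.diags) : T = Fan n := by
  apply triang_ext
  apply Finset.Subset.antisymm _ h
  intro d hd
  by_contra hdF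
  have h0 : (0:Fin n) ∉ d := fun h0 => hdF (mem_fan.mpr ⟨h0, T.isDiag d hd⟩)
  obtain ⟨f, hf, hcr⟩ := nonfan_crosses (T.isDiag d hd) h0
  exact T.noncross f (h hf) d hd hcr

lemma fan_card {n : ℕ} [NeZero n] (hn : 5 ≤ n) : (Fan n).diags.card ≤ n - 3 := by
  have hpos : 0 < n := by omega
  have hsub : (Fan n).diags ⊆ (Finset.Icc 2 (n-2)).image
      (fun m => s((0:Fin n), (⟨m % n, Nat.mod_lt _ hpos⟩ : Fin n))) := by
    intro d hd
    obtain ⟨x, rfl, hx2, hx3, hx4⟩ := fan_form hd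
    rw [Finset.mem_image]
    refine ⟨x.val, Finset.mem_Icc.mpr ⟨hx2, hx3⟩, ?_⟩
    have hxx : (⟨x.val % n, Nat.mod_lt _ hpos⟩ : Fin n) = x := Fin.ext (Nat.mod_eq_of_lt hx4)
    rw [hxx]
  calc (Fan n).diags.card ≤ _ := Finset.card_le_card hsub
    _ ≤ (Finset.Icc 2 (n-2)).card := Finset.card_image_le
    _ ≤ n - 3 := by rw [Nat.card_Icc]; omega

/-- Every triangulation contains an "ear" `s(p, p+2)`. -/
lemma ear_exists {n : ℕ} (hn : 5 ≤ n) (S : Triangulation n) :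
    ∃ p q : Fin n, q.val = p.val + 2 ∧ s(p,q) ∈ S.diags := by
  classical
  have key : ∀ k : ℕ, ∀ a b : Fin n, b.val - a.val ≤ k → 2 ≤ b.val - a.val →
      (s(a,b) ∈ S.diags ∨ (a.val = 0 ∧ b.val = n-1)) →
      ∃ p q : Fin n, q.val = p.val + 2 ∧ s(p,q) ∈ S.diags := by
    intro k
    induction k with
    | zero => intro a b h1 h2 _; omega
    | succ k ih =>
      intro a b h1 h2 hmem
      have hbn : b.val < n := b.isLt
      by_cases hbase : b.val - a.val = 2
      · rcases hmem with hmem | ⟨h0, hn1⟩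
        · exact ⟨a, b, by omega, hmem⟩
        · omega
      -- b - a ≥ 3
      have h3 : 3 ≤ b.val - a.val := by omega
      obtain ⟨m, ⟨hm1, hm2, hm3⟩, hmgr⟩ :
          ∃ m, (a.val < m ∧ m < b.val ∧
              (m = a.val + 1 ∨ ∃ x : Fin n, x.val = m ∧ s(a, x) ∈ S.diags)) ∧
            ∀ j, m < j → j ≤ b.val - 1 →
              ¬(a.val < j ∧ j < b.val ∧
                (j = a.val + 1 ∨ ∃ x : Fin n, x.val = j ∧ s(a, x) ∈ S.diags)) := by
        refine ⟨Nat.findGreatest (fun m => a.val < m ∧ m < b.val ∧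
            (m = a.val + 1 ∨ ∃ x : Fin n, x.val = m ∧ s(a, x) ∈ S.diags)) (b.val - 1), ?_, ?_⟩
        · exact Nat.findGreatest_spec
            (P := fun m => a.val < m ∧ m < b.val ∧
              (m = a.val + 1 ∨ ∃ x : Fin n, x.val = m ∧ s(a, x) ∈ S.diags))
            (show a.val + 1 ≤ b.val - 1 by omega) ⟨by omega, by omega, Or.inl rfl⟩
        · intro j hj1 hj2
          exact Nat.findGreatest_is_greatest
            (P := fun m => a.val < m ∧ m < b.val ∧
              (m = a.val + 1 ∨ ∃ x : Fin n, x.val = m ∧ s(a, x) ∈ S.diags)) hj1 hj2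
      have hmn : m < n := by omega
      obtain ⟨M, hMv⟩ : ∃ M : Fin n, M.val = m := ⟨⟨m, hmn⟩, rfl⟩
      by_cases hmb : m = b.val - 1
      · -- recurse on (a, M)
        rcases hm3 with h | ⟨x, hx, hmem'⟩
        · omega
        · have hxM : x = M := Fin.ext (by omega)
          rw [hxM] at hmem'
          exact ih a M (by omega) (by omega) (Or.inl hmem')
      · -- show s(M, b) ∈ S.diags, recurse on (M, b)
        have hMb : s(M, b) ∈ S.diags := by
          apply S.maximal
          · rw [isDiag_iff (show M < b from by rw [Fin.lt_def]; omega)]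
            rw [hMv]; omega
          intro g hg hcr
          obtain ⟨c, c', hgdef, hcc, hcc2, hcc3⟩ := diag_canon (S.isDiag g hg)
          have hcc' : c.val < c'.val := hcc
          have hc'n : c'.val < n := c'.isLt
          rw [hgdef, crosses_iff' (show M.val < b.val from by omega) hcc', hMv] at hcr
          rcases hcr with ⟨k1,k2,k3⟩ | ⟨k1,k2,k3⟩
          · -- m < c < b < c' : g crosses s(a,b) (or impossible)
            rcases hmem with hmem | ⟨h0, hn1⟩
            · apply S.noncross _ hmem g hg
              rw [hgdef, crosses_iff' (show a.val < b.val by omega) hcc']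
              left; exact ⟨by omega, k2, k3⟩
            · omega
          · -- c < m < c' < b
            rcases lt_trichotomy c.val a.val with h|h|h
            · rcases hmem with hmem | ⟨h0, hn1⟩
              · apply S.noncross _ hmem g hg
                rw [hgdef, crosses_iff' (show a.val < b.val by omega) hcc']
                right; exact ⟨h, by omega, k3⟩
              · omega
            · have hca : c = a := Fin.ext h
              apply hmgr c'.val (by omega) (by omega)
              refine ⟨by omega, by omega, Or.inr ⟨c', rfl, ?_⟩⟩
              rw [← hca, ← hgdef]; exact hg
            · rcases hm3 with h' | ⟨x, hx, hmem'⟩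
              · omega
              · have hxv : a.val < x.val := by omega
                apply S.noncross _ hmem' g hg
                rw [hgdef, crosses_iff' (show a.val < x.val from hxv) hcc']
                left; exact ⟨h, by omega, by omega⟩
        exact ih M b (by omega) (by omega) (Or.inl hMb)
  have h0n : 0 < n := by omega
  have hn1 : n - 1 < n := by omega
  refine key (n-1) ⟨0, h0n⟩ ⟨n-1, hn1⟩ ?_ ?_ (Or.inr ⟨rfl, rfl⟩)
  · show n - 1 - 0 ≤ n - 1; omega
  · show 2 ≤ n - 1 - 0; omega

section Main0

variable {n : ℕ} [NeZero n]

lemma main0 (hn : 5 ≤ n) (S : Triangulation n)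
    (hear : ∃ u v : Fin n, u.val = 1 ∧ v.val = n - 1 ∧ s(u,v) ∈ S.diags) :
    (TnS n S).Connected ∧ ∀ A B : TnSVert n S, (TnS n S).dist A B ≤ 2*n - 8 := by
  classical
  obtain ⟨u, v, hu, hv, hearS⟩ := hear
  have huv : u.val < v.val := by omega
  -- no diagonal of S contains 0
  have hS0 : ∀ d ∈ S.diags, (0:Fin n) ∉ d := by
    intro d hd h0
    obtain ⟨a, b, hdef, hab, h2, h3⟩ := diag_canon (S.isDiag d hd)
    have hab' : a.val < b.val := hab
    have hbn : b.val < n := b.isLt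
    rw [hdef, zero_mem_iff] at h0
    have ha0 : a.val = 0 := by omega
    apply S.noncross d hd _ hearS
    rw [hdef, crosses_iff' hab' (show u.val < v.val from huv)]
    left
    rw [hu, hv]
    exact ⟨by omega, by omega, by omega⟩
  have hFanDisj : Disjoint (Fan n).diags S.diags := by
    rw [Finset.disjoint_left]
    intro d hd hdS
    exact hS0 d hdS (mem_fan.mp hd).1
  -- every S-disjoint triangulation contains a fan diagonal
  have hTfan : ∀ T : Triangulation n, Disjoint T.diags S.diags →
      ∃ f, f ∈ (Fan n).diags ∧ f ∈ T.diags := by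
    intro T hT
    have heardiag : IsDiag n s(u,v) := by
      rw [isDiag_iff (show u < v from by rw [Fin.lt_def]; omega)]
      rw [hu, hv]; omega
    have hearnT : s(u,v) ∉ T.diags := fun h => (Finset.disjoint_left.mp hT h) hearS
    by_contra hno
    push_neg at hno
    apply hearnT
    apply T.maximal _ heardiag
    intro g hg hcr
    obtain ⟨c, c', hgdef, hcc, hcc2, hcc3⟩ := diag_canon (T.isDiag g hg)
    have hcc' : c.val < c'.val := hcc
    have hc'n : c'.val < n := c'.isLt
    rw [hgdef, crosses_iff' (show u.val < v.val from huv) hcc', hu, hv] at hcr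
    rcases hcr with ⟨k1,k2,k3⟩ | ⟨k1,k2,k3⟩
    · omega
    · have hc0 : c.val = 0 := by omega
      apply hno g
      · exact mem_fan.mpr ⟨by rw [hgdef, zero_mem_iff]; exact Or.inl hc0, T.isDiag g hg⟩
      · rw [hgdef] at hg ⊢; exact hg
  -- μ bound
  have hμbound : ∀ T : Triangulation n, Disjoint T.diags S.diags →
      ((Fan n).diags \ T.diags).card ≤ n - 4 := by
    intro T hT
    obtain ⟨f, hfF, hfT⟩ := hTfan T hT
    have hsub : (Fan n).diags \ T.diags ⊆ (Fan n).diags.erase f := by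
      intro x hx
      rw [Finset.mem_sdiff] at hx
      rw [Finset.mem_erase]
      exact ⟨fun h => hx.2 (h ▸ hfT), hx.1⟩
    calc ((Fan n).diags \ T.diags).card ≤ _ := Finset.card_le_card hsub
      _ = (Fan n).diags.card - 1 := Finset.card_erase_of_mem hfF
      _ ≤ n - 4 := by have := fan_card (n := n) hn; omega
  -- reachability to Fan
  have hreach : ∀ m : ℕ, ∀ T : Triangulation n, ∀ hT : Disjoint T.diags S.diags,
      ((Fan n).diags \ T.diags).card ≤ m →
      ∃ p : (TnS n S).Walk ⟨T, hT⟩ ⟨Fan n, hFanDisj⟩, p.length ≤ m := by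
    intro m
    induction m with
    | zero =>
      intro T hT hμ
      have h0 : (Fan n).diags \ T.diags = ∅ := Finset.card_eq_zero.mp (Nat.le_zero.mp hμ)
      have hFsub : (Fan n).diags ⊆ T.diags := by
        intro x hx
        by_contra hxT
        have hmem : x ∈ (Fan n).diags \ T.diags := Finset.mem_sdiff.mpr ⟨hx, hxT⟩
        rw [h0] at hmem
        exact absurd hmem (Finset.notMem_empty x)
      have hTF : T = Fan n := fan_subset_eq hFsub
      subst hTF
      exact ⟨SimpleGraph.Walk.nil, Nat.zero_le _⟩
    | succ m ih =>
      intro T hT hμ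
      by_cases hTF : T = Fan n
      · subst hTF
        exact ⟨SimpleGraph.Walk.nil, Nat.zero_le _⟩
      obtain ⟨T', hflip, hnew0, hss⟩ := flip_step n hn T hTF
      have hT' : Disjoint T'.diags S.diags := by
        rw [Finset.disjoint_left]
        intro d hd hdS
        by_cases hdT : d ∈ T.diags
        · exact (Finset.disjoint_left.mp hT hdT) hdS
        · exact hS0 d hdS (hnew0 d hd hdT)
      have hμ' : ((Fan n).diags \ T'.diags).card ≤ m := by
        have := Finset.card_lt_card hss
        omega
      obtain ⟨p, hp⟩ := ih T' hT' hμ'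
      have hadj : (TnS n S).Adj ⟨T, hT⟩ ⟨T', hT'⟩ := by
        refine ⟨?_, ?_⟩
        · intro h
          obtain ⟨d, hd1, hd2, -⟩ := hflip
          apply hd2
          have : T = T' := congrArg Subtype.val h
          rwa [← this]
        · exact Or.inl hflip
      exact ⟨SimpleGraph.Walk.cons hadj p, Nat.succ_le_succ hp⟩
  constructor
  · rw [SimpleGraph.connected_iff]
    constructor
    · intro A B
      obtain ⟨pA, -⟩ := hreach (n-4) A.1 A.2 (hμbound A.1 A.2)
      obtain ⟨pB, -⟩ := hreach (n-4) B.1 B.2 (hμbound B.1 B.2)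
      have hA : (⟨A.1, A.2⟩ : TnSVert n S) = A := rfl
      have hB : (⟨B.1, B.2⟩ : TnSVert n S) = B := rfl
      rw [← hA, ← hB]
      exact pA.reachable.trans pB.reachable.symm
    · exact ⟨⟨Fan n, hFanDisj⟩⟩
  · intro A B
    obtain ⟨pA, hpA⟩ := hreach (n-4) A.1 A.2 (hμbound A.1 A.2)
    obtain ⟨pB, hpB⟩ := hreach (n-4) B.1 B.2 (hμbound B.1 B.2)
    have hA : (⟨A.1, A.2⟩ : TnSVert n S) = A := rfl
    have hB : (⟨B.1, B.2⟩ : TnSVert n S) = B := rfl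
    have hwalk : ∃ p : (TnS n S).Walk A B, p.length ≤ 2*n - 8 := by
      rw [← hA, ← hB]
      refine ⟨pA.append pB.reverse, ?_⟩
      have h1 := SimpleGraph.Walk.length_append pA pB.reverse
      have h2 := SimpleGraph.Walk.length_reverse pB
      omega
    obtain ⟨p, hp⟩ := hwalk
    exact le_trans (SimpleGraph.dist_le p) hp

end Main0


section Rot

variable {n : ℕ} [NeZero n]

lemma val_add_eq (x k : Fin n) :
    (x + k).val = if x.val + k.val < n then x.val + k.val else x.val + k.val - n := by
  have h : (x + k).val = (x.val + k.val) % n := rfl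
  rw [h]
  split_ifs with hc
  · exact Nat.mod_eq_of_lt hc
  · rw [Nat.mod_eq_sub_mod (by omega)]
    exact Nat.mod_eq_of_lt (by omega)

lemma succ_val (hn : 2 ≤ n) (x : Fin n) : (x + 1).val = (x.val + 1) % n := by
  have h : (x + 1).val = (x.val + (1 : Fin n).val) % n := rfl
  rw [h, Fin.val_one', Nat.mod_eq_of_lt hn]

lemma rot_isDiag (hn : 2 ≤ n) (k : Fin n) {d : Sym2 (Fin n)} (h : IsDiag n d) :
    IsDiag n (Sym2.map (· + k) d) := by
  rcases h with ⟨a, b, rfl, h1, h2, h3⟩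
  rw [Sym2.map_pair_eq]
  have key : ∀ x y : Fin n, (x.val + 1) % n ≠ y.val → ((x+k).val + 1) % n ≠ (y+k).val := by
    intro x y hxy heq
    apply hxy
    have e1 : ((x+k) + 1).val = ((x+k).val + 1) % n := succ_val hn _
    have e2 : (x + 1).val = (x.val + 1) % n := succ_val hn x
    have hcomm : (x + k) + 1 = (x + 1) + k := add_right_comm x k 1
    have hv : ((x+1)+k).val = (y+k).val := by rw [← hcomm, e1, heq]
    have hxy1 : x + 1 = y := add_right_cancel (Fin.ext hv : (x+1)+k = y+k)
    rw [← hxy1]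
    exact e2.symm
  exact ⟨a + k, b + k, rfl,
    fun hh => h1 (add_right_cancel hh), key a b h2, key b a h3⟩

lemma rot_crosses (k : Fin n) {d e : Sym2 (Fin n)} (h : Crosses n d e) :
    Crosses n (Sym2.map (· + k) d) (Sym2.map (· + k) e) := by
  have aux : ∀ a b c c' : Fin n, a < c → c < b → b < c' →
      Crosses n (Sym2.map (· + k) s(a,b)) (Sym2.map (· + k) s(c,c')) := by
    intro a b c c' l1 l2 l3
    rw [Sym2.map_pair_eq, Sym2.map_pair_eq]
    have l1' : a.val < c.val := l1
    have l2' : c.val < b.val := l2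
    have l3' : b.val < c'.val := l3
    have ha := val_add_eq a k
    have hb := val_add_eq b k
    have hc := val_add_eq c k
    have hc' := val_add_eq c' k
    have hkn : k.val < n := k.isLt
    have hc'n : c'.val < n := c'.isLt
    by_cases w1 : a.val + k.val < n <;> by_cases w2 : c.val + k.val < n <;>
      by_cases w3 : b.val + k.val < n <;> by_cases w4 : c'.val + k.val < n
    · -- TTTT
      rw [if_pos w1] at ha; rw [if_pos w2] at hc; rw [if_pos w3] at hb; rw [if_pos w4] at hc'
      exact Or.inl ⟨a+k, b+k, c+k, c'+k, rfl, rfl,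
        by rw [Fin.lt_def]; omega, by rw [Fin.lt_def]; omega, by rw [Fin.lt_def]; omega⟩
    · -- TTTF
      rw [if_pos w1] at ha; rw [if_pos w2] at hc; rw [if_pos w3] at hb; rw [if_neg w4] at hc'
      exact Or.inr ⟨c'+k, c+k, a+k, b+k, Sym2.eq_swap, rfl,
        by rw [Fin.lt_def]; omega, by rw [Fin.lt_def]; omega, by rw [Fin.lt_def]; omega⟩
    · omega
    · -- TTFF
      rw [if_pos w1] at ha; rw [if_pos w2] at hc; rw [if_neg w3] at hb; rw [if_neg w4] at hc'
      exact Or.inl ⟨b+k, a+k, c'+k, c+k, Sym2.eq_swap, Sym2.eq_swap,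
        by rw [Fin.lt_def]; omega, by rw [Fin.lt_def]; omega, by rw [Fin.lt_def]; omega⟩
    · omega
    · omega
    · omega
    · -- TFFF
      rw [if_pos w1] at ha; rw [if_neg w2] at hc; rw [if_neg w3] at hb; rw [if_neg w4] at hc'
      exact Or.inr ⟨c+k, c'+k, b+k, a+k, rfl, Sym2.eq_swap,
        by rw [Fin.lt_def]; omega, by rw [Fin.lt_def]; omega, by rw [Fin.lt_def]; omega⟩
    · omega
    · omega
    · omega
    · omega
    · omega
    · omega
    · omega
    · -- FFFF
      rw [if_neg w1] at ha; rw [if_neg w2] at hc; rw [if_neg w3] at hb; rw [if_neg w4] at hc'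
      exact Or.inl ⟨a+k, b+k, c+k, c'+k, rfl, rfl,
        by rw [Fin.lt_def]; omega, by rw [Fin.lt_def]; omega, by rw [Fin.lt_def]; omega⟩
  rcases h with ⟨a,b,c,c',h1,h2,h3,h4,h5⟩ | ⟨a,b,c,c',h1,h2,h3,h4,h5⟩
  · rw [h1, h2]; exact aux a b c c' h3 h4 h5
  · rw [h1, h2] at *
    exact crosses_comm.mp (aux a b c c' h3 h4 h5)

lemma map_rot_inv (k : Fin n) (x : Sym2 (Fin n)) :
    Sym2.map (· + (-k)) (Sym2.map (· + k) x) = x := by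
  rw [Sym2.map_map]
  have : ((· + (-k)) ∘ (· + k) : Fin n → Fin n) = id := by
    funext y; simp
  rw [this, Sym2.map_id, id_eq]

/-- Rotation of a triangulation. -/
noncomputable def rotT (hn : 2 ≤ n) (k : Fin n) (T : Triangulation n) : Triangulation n where
  diags := T.diags.image (Sym2.map (· + k))
  isDiag := by
    intro d hd
    obtain ⟨d₀, hd₀, rfl⟩ := Finset.mem_image.mp hd
    exact rot_isDiag hn k (T.isDiag d₀ hd₀)
  noncross := by
    intro d hd e he hcr
    obtain ⟨d₀, hd₀, rfl⟩ := Finset.mem_image.mp hd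
    obtain ⟨e₀, he₀, rfl⟩ := Finset.mem_image.mp he
    have := rot_crosses (-k) hcr
    rw [map_rot_inv, map_rot_inv] at this
    exact T.noncross d₀ hd₀ e₀ he₀ this
  maximal := by
    intro d hd hnc
    have hd₀ : IsDiag n (Sym2.map (· + (-k)) d) := rot_isDiag hn (-k) hd
    have hmem : Sym2.map (· + (-k)) d ∈ T.diags := by
      apply T.maximal _ hd₀
      intro g hg hcr
      have h2 := rot_crosses k hcr
      have hdd : Sym2.map (· + k) (Sym2.map (· + (-k)) d) = d := by
        have := map_rot_inv (-k) d
        rwa [neg_neg] at this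
      rw [hdd] at h2
      exact hnc _ (Finset.mem_image_of_mem _ hg) h2
    have : Sym2.map (· + k) (Sym2.map (· + (-k)) d) = d := by
      have := map_rot_inv (-k) d
      rwa [neg_neg] at this
    rw [← this]
    exact Finset.mem_image_of_mem _ hmem

lemma rotT_mem (hn : 2 ≤ n) (k : Fin n) (T : Triangulation n) {d : Sym2 (Fin n)}
    (h : d ∈ T.diags) : Sym2.map (· + k) d ∈ (rotT hn k T).diags :=
  Finset.mem_image_of_mem _ h

lemma rot_inj (k : Fin n) : Function.Injective (Sym2.map (· + k) : Sym2 (Fin n) → Sym2 (Fin n)) :=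
  Sym2.map.injective (add_left_injective k)

lemma rotT_rotT (hn : 2 ≤ n) (k : Fin n) (T : Triangulation n) :
    rotT hn (-k) (rotT hn k T) = T := by
  apply triang_ext
  show ((T.diags.image _).image _) = T.diags
  rw [Finset.image_image]
  have : (Sym2.map (· + (-k)) ∘ Sym2.map (· + k) : Sym2 (Fin n) → Sym2 (Fin n)) = id := by
    funext x; exact map_rot_inv k x
  rw [this, Finset.image_id]

lemma rotT_disjoint (hn : 2 ≤ n) (k : Fin n) {T S : Triangulation n}
    (h : Disjoint T.diags S.diags) :
    Disjoint (rotT hn k T).diags (rotT hn k S).diags := by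
  exact (Finset.disjoint_image (rot_inj k)).mpr h

lemma rot_flipAdj (hn : 2 ≤ n) (k : Fin n) {T T' : Triangulation n} (h : FlipAdj T T') :
    FlipAdj (rotT hn k T) (rotT hn k T') := by
  obtain ⟨d, hd1, hd2, hd3⟩ := h
  refine ⟨Sym2.map (· + k) d, rotT_mem hn k T hd1, ?_, ?_⟩
  · intro hmem
    obtain ⟨x, hx, hxe⟩ := Finset.mem_image.mp hmem
    rw [rot_inj k hxe] at hx
    exact hd2 hx
  · intro e he hne
    obtain ⟨x, hx, rfl⟩ := Finset.mem_image.mp he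
    have hxd : x ≠ d := fun hh => hne (by rw [hh])
    exact rotT_mem hn k T' (hd3 x hx hxd)

end Rot


/-- For `n ≥ 5` and any triangulation `S` of the convex
`n`-gon, the flip graph `T_n(S)` on triangulations disjoint from `S` is
connected and has diameter at most `2n - 8`. -/
theorem TnS_connected_diam (n : ℕ) (hn : 5 ≤ n) (S : Triangulation n) :
    (TnS n S).Connected ∧
      ∀ A B : TnSVert n S, (TnS n S).dist A B ≤ 2 * n - 8 := by
  haveI : NeZero n := ⟨by omega⟩
  have hn2 : 2 ≤ n := by omega
  obtain ⟨p, q, hq, hpq⟩ := ear_exists hn S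
  have hqn : q.val < n := q.isLt
  have hpn : p.val + 1 < n := by omega
  set t : Fin n := ⟨p.val + 1, hpn⟩ with ht
  set k : Fin n := -t with hk
  have htk : (t + k).val = 0 := by rw [hk, add_neg_cancel]; rfl
  have hkv : k.val = n - (p.val + 1) := by
    have h := val_add_eq t k
    rw [htk] at h
    have htv : t.val = p.val + 1 := rfl
    have hkn : k.val < n := k.isLt
    split_ifs at h <;> omega
  set S' := rotT hn2 k S with hS'
  have hpk : (p + k).val = n - 1 := by
    have h := val_add_eq p k
    rw [hkv] at h
    split_ifs at h <;> omega
  have hqk : (q + k).val = 1 := by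
    have h := val_add_eq q k
    rw [hkv, hq] at h
    split_ifs at h <;> omega
  have hear' : ∃ u v : Fin n, u.val = 1 ∧ v.val = n - 1 ∧ s(u,v) ∈ S'.diags := by
    refine ⟨q + k, p + k, hqk, hpk, ?_⟩
    have hmem := rotT_mem hn2 k S hpq
    rw [Sym2.map_pair_eq] at hmem
    rw [Sym2.eq_swap]
    exact hmem
  obtain ⟨hconn', hdist'⟩ := main0 hn S' hear'
  have hSS : rotT hn2 (-k) S' = S := rotT_rotT hn2 k S
  have hφdisj : ∀ A : TnSVert n S, Disjoint (rotT hn2 k A.1).diags S'.diags :=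
    fun A => rotT_disjoint hn2 k A.2
  have hψdisj : ∀ B : TnSVert n S', Disjoint (rotT hn2 (-k) B.1).diags S.diags := by
    intro B
    have h := rotT_disjoint hn2 (-k) B.2
    rwa [hSS] at h
  let ψg : TnS n S' →g TnS n S :=
    { toFun := fun B => ⟨rotT hn2 (-k) B.1, hψdisj B⟩
      map_rel' := by
        intro B C hadj
        obtain ⟨hne, hor⟩ : B ≠ C ∧ (FlipAdj B.1 C.1 ∨ FlipAdj C.1 B.1) := hadj
        refine ⟨?_, ?_⟩
        · intro hEq
          apply hne
          have h1 : rotT hn2 (-k) B.1 = rotT hn2 (-k) C.1 := congrArg Subtype.val hEq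
          have h2 : rotT hn2 (-(-k)) (rotT hn2 (-k) B.1)
              = rotT hn2 (-(-k)) (rotT hn2 (-k) C.1) := by rw [h1]
          rw [rotT_rotT hn2 (-k) B.1, rotT_rotT hn2 (-k) C.1] at h2
          exact Subtype.ext h2
        · rcases hor with h|h
          · exact Or.inl (rot_flipAdj hn2 (-k) h)
          · exact Or.inr (rot_flipAdj hn2 (-k) h) }
  have hψφ : ∀ A : TnSVert n S, ψg ⟨rotT hn2 k A.1, hφdisj A⟩ = A := by
    intro A
    apply Subtype.ext
    show rotT hn2 (-k) (rotT hn2 k A.1) = A.1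
    exact rotT_rotT hn2 k A.1
  constructor
  · rw [SimpleGraph.connected_iff]
    constructor
    · intro A B
      have hr : (TnS n S').Reachable ⟨rotT hn2 k A.1, hφdisj A⟩ ⟨rotT hn2 k B.1, hφdisj B⟩ :=
        hconn'.preconnected _ _
      obtain ⟨w⟩ := hr
      exact ⟨(w.map ψg).copy (hψφ A) (hψφ B)⟩
    · exact Nonempty.map (fun B => ψg B) hconn'.nonempty
  · intro A B
    have hr : (TnS n S').Reachable ⟨rotT hn2 k A.1, hφdisj A⟩ ⟨rotT hn2 k B.1, hφdisj B⟩ :=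
      hconn'.preconnected _ _
    obtain ⟨w, hw⟩ := hr.exists_walk_length_eq_dist
    calc (TnS n S).dist A B ≤ ((w.map ψg).copy (hψφ A) (hψφ B)).length :=
          SimpleGraph.dist_le _
      _ = w.length := (SimpleGraph.Walk.length_copy _ _ _).trans (SimpleGraph.Walk.length_map (f := ψg) (p := w))
      _ = (TnS n S').dist ⟨rotT hn2 k A.1, hφdisj A⟩ ⟨rotT hn2 k B.1, hφdisj B⟩ := hw
      _ ≤ 2*n - 8 := hdist' _ _
end
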